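/- Let L ⊆ M_{n,d,t} be a t-spread lex set and N ⊆ M_{n,d,t} a t-spread strongly stable set with |L| ≤ |N|. Then m_{≤i}(L) ≤ m_{≤i}(N) for all i, where m_{≤i}(·) counts the members whose maximum element is at most i. -/

import Mathlib

open Finset

/-- The set of `t`-spread "monomials" of degree `d` in variables `x_1,...,x_n`,
identified with `d`-element subsets of `{1,...,n}` with consecutive gaps `≥ t`. -/
def M (n d t : ℕ) : Finset (Finset ℕ) :=
  (Finset.powersetCard d (Finset.Icc 1 n)).filter
    (fun F => ∀ i ∈ F, ∀ j ∈ F, i < j → i + t ≤ j)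

/-- The `τ`-shadow of a family `L ⊆ M n d t`. -/
def shad (τ n d : ℕ) (L : Finset (Finset ℕ)) : Finset (Finset ℕ) :=
  (M n (d + 1) τ).filter (fun G => ∃ F ∈ L, F ⊆ G)

/-- `F >_lex G` : the smallest element of the symmetric difference belongs to `F`. -/
def lexGT (F G : Finset ℕ) : Prop :=
  ∃ k, k ∈ F ∧ k ∉ G ∧ ∀ j < k, (j ∈ F ↔ j ∈ G)

/-- `L` is a `t`-spread lex set in `M n d t` (a lex up-set). -/
def IsLexSet (n d t : ℕ) (L : Finset (Finset ℕ)) : Prop :=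
  L ⊆ M n d t ∧ ∀ u ∈ L, ∀ v ∈ M n d t, lexGT v u → v ∈ L

/-- `L` is a `t`-spread strongly stable set in `M n d t`. -/
def IsSSS (n d t : ℕ) (L : Finset (Finset ℕ)) : Prop :=
  L ⊆ M n d t ∧ ∀ F ∈ L, ∀ j ∈ F, ∀ i < j, i ∉ F →
    insert i (F.erase j) ∈ M n d t → insert i (F.erase j) ∈ L

/-- number of members of `L` with maximum element `= i`. -/
def mEq (i : ℕ) (L : Finset (Finset ℕ)) : ℕ :=
  (L.filter (fun F => i ∈ F ∧ ∀ j ∈ F, j ≤ i)).card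

/-- number of members of `L` with maximum element `≤ i`. -/
def mLe (i : ℕ) (L : Finset (Finset ℕ)) : ℕ :=
  (L.filter (fun F => ∀ j ∈ F, j ≤ i)).card

lemma geo_sum (B k : ℕ) : ∑ j ∈ Icc (k+1) B, 2^(B-j) = 2^(B-k) - 1 := by
  induction B with
  | zero => simp
  | succ B ih =>
    rcases le_or_gt (k+1) (B+1) with h | h
    · rw [Finset.sum_Icc_succ_top h]
      have hc : ∀ j ∈ Icc (k+1) B, 2^(B+1-j) = 2 * 2^(B-j) := by
        intro j hj; rw [mem_Icc] at hj
        have he : B + 1 - j = (B - j) + 1 := by omega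
        rw [he, pow_succ]; ring
      rw [Finset.sum_congr rfl hc, ← Finset.mul_sum, ih]
      have h1 : 1 ≤ 2^(B-k) := Nat.one_le_two_pow
      have h2 : B + 1 - k = (B - k) + 1 := by omega
      rw [h2, pow_succ]
      have h3 : B + 1 - (B+1) = 0 := by omega
      rw [h3]
      omega
    · rw [Icc_eq_empty (by omega)]
      have h0 : B + 1 - k = 0 := by omega
      simp [h0]

def val (B : ℕ) (F : Finset ℕ) : ℕ := ∑ j ∈ F, 2 ^ (B - j)

lemma lex_total {F G : Finset ℕ} (h : F ≠ G) : lexGT F G ∨ lexGT G F := by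
  have hD : ((F \ G) ∪ (G \ F)).Nonempty := by
    rw [Finset.nonempty_iff_ne_empty]
    intro he
    apply h
    ext j
    constructor <;> intro hj <;> by_contra hc
    · have hm : j ∈ (F \ G) ∪ (G \ F) := by simp [hj, hc]
      simp [he] at hm
    · have hm : j ∈ (F \ G) ∪ (G \ F) := by simp [hj, hc]
      simp [he] at hm
  obtain ⟨k, hk, hmin⟩ := Finset.exists_min_image _ id hD
  have hag : ∀ j < k, (j ∈ F ↔ j ∈ G) := by
    intro j hj
    by_contra hc
    have hjD : j ∈ (F \ G) ∪ (G \ F) := by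
      simp only [mem_union, mem_sdiff]; tauto
    have := hmin j hjD; simp only [id] at this; omega
  rw [mem_union, mem_sdiff, mem_sdiff] at hk
  rcases hk with ⟨h1, h2⟩ | ⟨h1, h2⟩
  · exact Or.inl ⟨k, h1, h2, hag⟩
  · exact Or.inr ⟨k, h1, h2, fun j hj => (hag j hj).symm⟩

lemma lex_val {B : ℕ} {F G : Finset ℕ} (hFB : ∀ j ∈ F, j ≤ B) (hGB : ∀ j ∈ G, j ≤ B)
    (h : lexGT F G) : val B G < val B F := by
  obtain ⟨k, hkF, hkG, hag⟩ := h
  have hkB : k ≤ B := hFB k hkF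
  have hsplit : ∀ S : Finset ℕ, val B S =
      ∑ j ∈ S.filter (· < k), 2^(B-j) + ∑ j ∈ S.filter (fun j => ¬ j < k), 2^(B-j) :=
    fun S => (Finset.sum_filter_add_sum_filter_not S _ _).symm
  rw [hsplit F, hsplit G]
  have hlo : F.filter (· < k) = G.filter (· < k) := by
    ext j; simp only [mem_filter]
    constructor <;> rintro ⟨h1, h2⟩
    · exact ⟨(hag j h2).mp h1, h2⟩
    · exact ⟨(hag j h2).mpr h1, h2⟩
  rw [hlo]
  have hhiF : 2^(B-k) ≤ ∑ j ∈ F.filter (fun j => ¬ j < k), 2^(B-j) :=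
    Finset.single_le_sum (f := fun j => 2^(B-j)) (fun _ _ => Nat.zero_le _)
      (by simp only [mem_filter]; exact ⟨hkF, by omega⟩)
  have hsub : G.filter (fun j => ¬ j < k) ⊆ Icc (k+1) B := by
    intro j hj; rw [mem_filter] at hj; rw [mem_Icc]
    have h1 := hGB j hj.1
    have h2 : j ≠ k := fun he => hkG (he ▸ hj.1)
    have h3 := hj.2
    omega
  have hhiG : ∑ j ∈ G.filter (fun j => ¬ j < k), 2^(B-j) ≤ 2^(B-k) - 1 := by
    calc ∑ j ∈ G.filter (fun j => ¬ j < k), 2^(B-j)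
        ≤ ∑ j ∈ Icc (k+1) B, 2^(B-j) := Finset.sum_le_sum_of_subset hsub
      _ = 2^(B-k) - 1 := geo_sum B k
  have h1 : 1 ≤ 2^(B-k) := Nat.one_le_two_pow
  omega

lemma lex_trans {B : ℕ} {F G H : Finset ℕ} (hF : ∀ j ∈ F, j ≤ B) (hG : ∀ j ∈ G, j ≤ B)
    (hH : ∀ j ∈ H, j ≤ B) (h1 : lexGT F G) (h2 : lexGT G H) : lexGT F H := by
  have v1 := lex_val hF hG h1
  have v2 := lex_val hG hH h2
  have hne : F ≠ H := by
    intro he; rw [he] at v1; omega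
  rcases lex_total hne with h | h
  · exact h
  · have := lex_val hH hF h; omega

lemma lex_asymm {B : ℕ} {F G : Finset ℕ} (hF : ∀ j ∈ F, j ≤ B) (hG : ∀ j ∈ G, j ≤ B)
    (h : lexGT F G) : ¬ lexGT G F := by
  intro h'
  have v1 := lex_val hF hG h
  have v2 := lex_val hG hF h'
  omega

lemma mem_M {n d t : ℕ} {F : Finset ℕ} : F ∈ M n d t ↔
    F ⊆ Icc 1 n ∧ F.card = d ∧ ∀ i ∈ F, ∀ j ∈ F, i < j → i + t ≤ j := by
  simp only [M, mem_filter, Finset.mem_powersetCard]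
  tauto

lemma sup_id_mem {G : Finset ℕ} (h : G.Nonempty) : G.sup id ∈ G := by
  have h1 : G.max' h = G.sup id := by
    apply le_antisymm
    · exact Finset.le_sup (f := id) (G.max'_mem h)
    · exact Finset.sup_le fun b hb => G.le_max' b hb
  rw [← h1]
  exact G.max'_mem h

lemma mLe_eq_card {n d t i : ℕ} {S : Finset (Finset ℕ)} (hS : S ⊆ M n d t) (h : n ≤ i) :
    mLe i S = S.card := by
  unfold mLe
  rw [Finset.filter_true_of_mem]
  intro F hF j hj
  have hm := (mem_Icc.mp ((mem_M.mp (hS hF)).1 hj)).2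
  omega

lemma sum_identity {K : ℕ} (S : Finset (Finset ℕ))
    (hS : ∀ G ∈ S, G.Nonempty ∧ ∀ g ∈ G, 1 ≤ g) :
    ∑ G ∈ S, (K + 1 - G.sup id) = ∑ j ∈ Icc 1 K, mLe j S := by
  classical
  have step1 : ∀ G ∈ S, K + 1 - G.sup id = ((Icc 1 K).filter (fun j => G.sup id ≤ j)).card := by
    intro G hG
    obtain ⟨hne, hge⟩ := hS G hG
    have h1 : 1 ≤ G.sup id := hge _ (sup_id_mem hne)
    have he : (Icc 1 K).filter (fun j => G.sup id ≤ j) = Icc (G.sup id) K := by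
      ext j; simp only [mem_filter, mem_Icc]; omega
    rw [he, Nat.card_Icc]
  rw [Finset.sum_congr rfl step1]
  have step2 : ∀ G ∈ S, ((Icc 1 K).filter (fun j => G.sup id ≤ j)).card
      = ∑ j ∈ Icc 1 K, if G.sup id ≤ j then 1 else 0 := by
    intro G _
    rw [Finset.card_eq_sum_ones, Finset.sum_filter]
  rw [Finset.sum_congr rfl step2, Finset.sum_comm]
  apply Finset.sum_congr rfl
  intro j _
  unfold mLe
  rw [Finset.card_eq_sum_ones, Finset.sum_filter]
  apply Finset.sum_congr rfl
  intro G _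
  by_cases h : G.sup id ≤ j
  · rw [if_pos h, if_pos (show ∀ x ∈ G, x ≤ j from fun x hx => le_trans (Finset.le_sup (f := id) hx) h)]
  · rw [if_neg h, if_neg (show ¬ ∀ x ∈ G, x ≤ j from fun hall => h (Finset.sup_le fun x hx => hall x hx))]

lemma sing_structure {n : ℕ} (S : Finset (Finset ℕ))
    (hsing : ∀ F ∈ S, ∃ a, 1 ≤ a ∧ a ≤ n ∧ F = {a})
    (hdc : ∀ a b, 1 ≤ a → a ≤ b → ({b} : Finset ℕ) ∈ S → ({a} : Finset ℕ) ∈ S) (i : ℕ) :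
    mLe i S = min S.card i := by
  classical
  set T := (Icc 1 n).filter (fun a => ({a} : Finset ℕ) ∈ S) with hT
  have hST : S = T.image (fun a => ({a} : Finset ℕ)) := by
    ext F; simp only [mem_image, hT, mem_filter, mem_Icc]
    constructor
    · intro hF; obtain ⟨a, h1, h2, rfl⟩ := hsing F hF; exact ⟨a, ⟨⟨h1, h2⟩, hF⟩, rfl⟩
    · rintro ⟨a, ⟨_, ha⟩, rfl⟩; exact ha
  have hinj : Set.InjOn (fun a => ({a} : Finset ℕ)) T :=
    fun a _ b _ h => Finset.singleton_injective h
  have hcardT : S.card = T.card := by rw [hST, Finset.card_image_of_injOn hinj]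
  have hTdc : T = Icc 1 T.card := by
    apply Finset.eq_of_subset_of_card_le
    · intro x hx
      rw [mem_Icc]
      rw [hT, mem_filter, mem_Icc] at hx
      refine ⟨hx.1.1, ?_⟩
      have hsub : Icc 1 x ⊆ T := by
        intro a ha; rw [mem_Icc] at ha
        rw [hT, mem_filter, mem_Icc]
        exact ⟨⟨ha.1, le_trans ha.2 hx.1.2⟩, hdc a x ha.1 ha.2 hx.2⟩
      calc x = (Icc 1 x).card := by rw [Nat.card_Icc]; omega
        _ ≤ T.card := Finset.card_le_card hsub
    · rw [Nat.card_Icc]; omega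
  have hfil : S.filter (fun F => ∀ j ∈ F, j ≤ i)
      = (T.filter (fun a => a ≤ i)).image (fun a => ({a} : Finset ℕ)) := by
    ext F
    simp only [mem_filter, mem_image]
    constructor
    · intro ⟨hF, hle⟩
      obtain ⟨a, h1, h2, rfl⟩ := hsing F hF
      refine ⟨a, ⟨?_, hle a (mem_singleton_self a)⟩, rfl⟩
      rw [hT, mem_filter, mem_Icc]; exact ⟨⟨h1, h2⟩, hF⟩
    · rintro ⟨a, ⟨haT, hai⟩, rfl⟩
      rw [hT, mem_filter] at haT
      refine ⟨haT.2, ?_⟩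
      intro j hj; rw [mem_singleton] at hj; omega
  have : mLe i S = (T.filter (fun a => a ≤ i)).card := by
    unfold mLe
    rw [hfil, Finset.card_image_of_injOn (hinj.mono (fun x hx => (Finset.mem_filter.mp hx).1))]
  rw [this, hcardT]
  have key : T.filter (fun a => a ≤ i) = Icc 1 (min T.card i) := by
    conv_lhs => rw [hTdc]
    ext a; simp only [mem_filter, mem_Icc]; omega
  rw [key, Nat.card_Icc]
  omega

lemma d_one_case {n t : ℕ} (L N : Finset (Finset ℕ))
    (hL : IsLexSet n 1 t L) (hN : IsSSS n 1 t N) (hcard : L.card ≤ N.card) (i : ℕ) :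
    mLe i L ≤ mLe i N := by
  have hsingleton_mem : ∀ a, 1 ≤ a → a ≤ n → ({a} : Finset ℕ) ∈ M n 1 t := by
    intro a h1 h2
    rw [mem_M]
    refine ⟨?_, card_singleton a, ?_⟩
    · intro x hx; rw [mem_singleton] at hx; rw [mem_Icc]; omega
    · intro x hx y hy hxy
      rw [mem_singleton] at hx hy; omega
  have hsing : ∀ (S : Finset (Finset ℕ)), S ⊆ M n 1 t →
      ∀ F ∈ S, ∃ a, 1 ≤ a ∧ a ≤ n ∧ F = {a} := by
    intro S hS F hF
    obtain ⟨hIcc, hc, _⟩ := mem_M.mp (hS hF)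
    obtain ⟨a, rfl⟩ := Finset.card_eq_one.mp hc
    have := mem_Icc.mp (hIcc (mem_singleton_self a))
    exact ⟨a, this.1, this.2, rfl⟩
  have hdcL : ∀ a b, 1 ≤ a → a ≤ b → ({b} : Finset ℕ) ∈ L → ({a} : Finset ℕ) ∈ L := by
    intro a b h1 hab hb
    rcases eq_or_lt_of_le hab with rfl | hlt
    · exact hb
    · have hbn : b ≤ n := by
        obtain ⟨hIcc, _, _⟩ := mem_M.mp (hL.1 hb)
        exact (mem_Icc.mp (hIcc (mem_singleton_self b))).2
      refine hL.2 {b} hb {a} (hsingleton_mem a h1 (by omega)) ⟨a, mem_singleton_self a, ?_, ?_⟩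
      · rw [mem_singleton]; omega
      · intro j hj; rw [mem_singleton, mem_singleton]
        constructor <;> intro <;> omega
  have hdcN : ∀ a b, 1 ≤ a → a ≤ b → ({b} : Finset ℕ) ∈ N → ({a} : Finset ℕ) ∈ N := by
    intro a b h1 hab hb
    rcases eq_or_lt_of_le hab with rfl | hlt
    · exact hb
    · have hbn : b ≤ n := by
        obtain ⟨hIcc, _, _⟩ := mem_M.mp (hN.1 hb)
        exact (mem_Icc.mp (hIcc (mem_singleton_self b))).2
      have hres := hN.2 {b} hb b (mem_singleton_self b) a hlt
        (by rw [mem_singleton]; omega)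
      rw [Finset.erase_singleton, insert_empty_eq] at hres
      exact hres (hsingleton_mem a h1 (by omega))
  rw [sing_structure L (hsing L hL.1) hdcL i, sing_structure N (hsing N hN.1) hdcN i]
  omega

lemma crux {n d t : ℕ} (ht : 1 ≤ t) (hd : 2 ≤ d) (hn : 1 ≤ n)
    (L N : Finset (Finset ℕ)) (hL : IsLexSet n d t L) (hN : IsSSS n d t N)
    (hcard : L.card ≤ N.card)
    (IH : ∀ L' N' : Finset (Finset ℕ), IsLexSet (n-t) (d-1) t L' → IsSSS (n-t) (d-1) t N' →
      L'.card ≤ N'.card → ∀ j, mLe j L' ≤ mLe j N') :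
    mLe (n-1) L ≤ mLe (n-1) N := by
  classical
  unfold mLe
  by_contra hcon
  push_neg at hcon
  set L0 := L.filter (fun F => ∀ j ∈ F, j ≤ n - 1) with hL0
  set N0 := N.filter (fun F => ∀ j ∈ F, j ≤ n - 1) with hN0
  -- hcon : N0.card < L0.card
  have hL0ne : L0.Nonempty := Finset.card_pos.mp (by omega)
  obtain ⟨w, hwL0, hwmin⟩ := Finset.exists_min_image L0 (val n) hL0ne
  have hwL : w ∈ L := (mem_filter.mp hwL0).1
  have hwle : ∀ j ∈ w, j ≤ n - 1 := (mem_filter.mp hwL0).2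
  have hwM : w ∈ M n d t := hL.1 hwL
  obtain ⟨hwIcc, hwcard, hwspread⟩ := mem_M.mp hwM
  have hbnd : ∀ F, F ∈ M n d t → ∀ j ∈ F, j ≤ n :=
    fun F hF j hj => (mem_Icc.mp ((mem_M.mp hF).1 hj)).2
  have hge1 : ∀ F, F ∈ M n d t → ∀ j ∈ F, 1 ≤ j :=
    fun F hF j hj => (mem_Icc.mp ((mem_M.mp hF).1 hj)).1
  have hbnd' : ∀ F, F ∈ M (n-t) (d-1) t → ∀ j ∈ F, j ≤ n := by
    intro F hF j hj
    have := (mem_Icc.mp ((mem_M.mp hF).1 hj)).2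
    omega
  have hwne : w.Nonempty := by rw [← Finset.card_pos, hwcard]; omega
  set wm := w.sup id with hwm
  have hwmmem : wm ∈ w := sup_id_mem hwne
  have hwmle : ∀ j ∈ w, j ≤ wm := fun j hj => Finset.le_sup (f := id) hj
  have htn : t + 2 ≤ n := by
    obtain ⟨a, haw, hane⟩ := Finset.exists_mem_ne (s := w) (by omega) wm
    have h1 : a < wm := lt_of_le_of_ne (hwmle a haw) hane
    have h2 := hwspread a haw wm hwmmem h1
    have h3 := hwle wm hwmmem
    have h4 : 1 ≤ a := (mem_Icc.mp (hwIcc haw)).1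
    omega
  have hminlex : ∀ v ∈ L0, v ≠ w → lexGT v w := by
    intro v hv hne
    rcases lex_total hne with h | h
    · exact h
    · exfalso
      have hvM : v ∈ M n d t := hL.1 (mem_filter.mp hv).1
      have hv1 := lex_val (hbnd w hwM) (hbnd v hvM) h
      have hv2 := hwmin v hv
      omega
  set UpW := (M n d t).filter (fun v => lexGT v w ∨ v = w) with hUpW
  have hUpWsubL : UpW ⊆ L := by
    intro v hv
    obtain ⟨hvM, hv2⟩ := mem_filter.mp hv
    rcases hv2 with h | rfl
    · exact hL.2 w hwL v hvM h
    · exact hwL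
  set UpW0 := UpW.filter (fun v => n ∉ v) with hUpW0
  set UpW1 := UpW.filter (fun v => n ∈ v) with hUpW1
  have hUpWsplit : UpW1.card + UpW0.card = UpW.card :=
    Finset.card_filter_add_card_filter_not (p := fun v => n ∈ v)
  have hL0sub : L0 ⊆ UpW0 := by
    intro v hv
    obtain ⟨hvL, hvle⟩ := mem_filter.mp hv
    have hvM := hL.1 hvL
    refine mem_filter.mpr ⟨mem_filter.mpr ⟨hvM, ?_⟩, ?_⟩
    · by_cases hvw : v = w
      · exact Or.inr hvw
      · exact Or.inl (hminlex v hv hvw)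
    · intro hnv; have := hvle n hnv; omega
  have hr0 : L0.card ≤ UpW0.card := Finset.card_le_card hL0sub
  set w' := w.erase wm with hw'
  have hw'card : w'.card = d - 1 := by rw [hw', Finset.card_erase_of_mem hwmmem, hwcard]
  have hw'ne : w'.Nonempty := by rw [← Finset.card_pos, hw'card]; omega
  have hw'M : w' ∈ M (n-t) (d-1) t := by
    rw [mem_M]
    refine ⟨?_, hw'card, ?_⟩
    · intro g hg
      obtain ⟨hgne, hgw⟩ := mem_erase.mp hg
      have h1 : g < wm := lt_of_le_of_ne (hwmle g hgw) hgne
      have h2 := hwspread g hgw wm hwmmem h1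
      have h3 := hwle wm hwmmem
      rw [mem_Icc]
      exact ⟨(mem_Icc.mp (hwIcc hgw)).1, by omega⟩
    · intro a ha b hb hab
      exact hwspread a (mem_erase.mp ha).2 b (mem_erase.mp hb).2 hab
  set Lup := (M (n-t) (d-1) t).filter (fun G => lexGT G w ∨ G = w') with hLup
  have hw'Lup : w' ∈ Lup := mem_filter.mpr ⟨hw'M, Or.inr rfl⟩
  have hJ : ∀ v' ∈ M (n-t) (d-1) t, lexGT v' w' → lexGT v' w := by
    intro v' hv'M hlex
    obtain ⟨k, hkv, hkw', hag⟩ := hlex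
    obtain ⟨hv'Icc, hv'card, _⟩ := mem_M.mp hv'M
    by_cases hk : k < wm
    · refine ⟨k, hkv, ?_, ?_⟩
      · intro hkw
        exact hkw' (mem_erase.mpr ⟨by omega, hkw⟩)
      · intro j hj
        rw [hag j hj, hw']
        constructor
        · intro h; exact (mem_erase.mp h).2
        · intro h; exact mem_erase.mpr ⟨by omega, h⟩
    · exfalso
      push_neg at hk
      have hsub : insert k w' ⊆ v' := by
        intro x hx
        rcases mem_insert.mp hx with rfl | hxw'
        · exact hkv
        · obtain ⟨hxne, hxw⟩ := mem_erase.mp hxw'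
          have h1 : x < wm := lt_of_le_of_ne (hwmle x hxw) hxne
          exact (hag x (by omega)).mpr hxw'
      have h1 : (insert k w').card = d := by
        rw [Finset.card_insert_of_notMem hkw', hw'card]; omega
      have h2 := Finset.card_le_card hsub
      rw [h1, hv'card] at h2; omega
  have hLupLex : IsLexSet (n-t) (d-1) t Lup := by
    constructor
    · exact Finset.filter_subset _ _
    · intro u hu v hvM hlex
      obtain ⟨huM, hu2⟩ := mem_filter.mp hu
      refine mem_filter.mpr ⟨hvM, Or.inl ?_⟩
      rcases hu2 with h | heq
      · exact lex_trans (B := n) (hbnd' v hvM) (hbnd' u huM) (hbnd w hwM) hlex h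
      · rw [heq] at hlex
        exact hJ v hvM hlex
  -- Claim A
  have hClaimA : UpW0 ⊆ Lup.biUnion
      (fun G => (Icc (G.sup id + t) (n-1)).image (fun j => insert j G)) := by
    intro v hv
    obtain ⟨hvUp, hnv⟩ := mem_filter.mp hv
    obtain ⟨hvM, hvlex⟩ := mem_filter.mp hvUp
    obtain ⟨hvIcc, hvcard, hvspread⟩ := mem_M.mp hvM
    have hvne : v.Nonempty := by rw [← Finset.card_pos, hvcard]; omega
    set vm := v.sup id with hvm
    have hvmmem : vm ∈ v := sup_id_mem hvne
    have hvmle : ∀ j ∈ v, j ≤ vm := fun j hj => Finset.le_sup (f := id) hj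
    set G := v.erase vm with hG
    have hGcard : G.card = d - 1 := by rw [hG, Finset.card_erase_of_mem hvmmem, hvcard]
    have hGne : G.Nonempty := by rw [← Finset.card_pos, hGcard]; omega
    have hvmn : vm ≤ n - 1 := by
      have h1 := hbnd v hvM vm hvmmem
      have h2 : vm ≠ n := fun he => hnv (he ▸ hvmmem)
      omega
    have hGsup : G.sup id + t ≤ vm := by
      have hs := sup_id_mem hGne
      rw [hG] at hs
      obtain ⟨hne2, hmem2⟩ := mem_erase.mp hs
      have : G.sup id = (v.erase vm).sup id := by rw [hG]
      rw [this]
      exact hvspread _ hmem2 vm hvmmem (lt_of_le_of_ne (hvmle _ hmem2) hne2)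
    have hGM : G ∈ M (n-t) (d-1) t := by
      rw [mem_M]
      refine ⟨?_, hGcard, ?_⟩
      · intro g hg
        rw [hG] at hg
        obtain ⟨hgne, hgv⟩ := mem_erase.mp hg
        have h1 : g + t ≤ vm := hvspread g hgv vm hvmmem (lt_of_le_of_ne (hvmle g hgv) hgne)
        rw [mem_Icc]
        exact ⟨(mem_Icc.mp (hvIcc hgv)).1, by omega⟩
      · intro a ha b hb hab
        rw [hG] at ha hb
        exact hvspread a (mem_erase.mp ha).2 b (mem_erase.mp hb).2 hab
    have hGLup : G ∈ Lup := by
      refine mem_filter.mpr ⟨hGM, ?_⟩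
      rcases hvlex with hlex | heq
      · obtain ⟨k, hkv, hkw, hag⟩ := hlex
        have hkvm : k ≤ vm := hvmle k hkv
        rcases lt_or_eq_of_le hkvm with hklt | hkeq
        · left
          refine ⟨k, ?_, hkw, ?_⟩
          · rw [hG]; exact mem_erase.mpr ⟨by omega, hkv⟩
          · intro j hj
            rw [← hag j hj, hG]
            constructor
            · exact fun h => (mem_erase.mp h).2
            · exact fun h => mem_erase.mpr ⟨by omega, h⟩
        · -- k = vm : show G = w'
          right
          have hsubGw : G ⊆ w := by
            intro g hg
            rw [hG] at hg
            obtain ⟨hgne, hgv⟩ := mem_erase.mp hg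
            have hglt : g < vm := lt_of_le_of_ne (hvmle g hgv) hgne
            exact (hag g (by omega)).mp hgv
          have hzcard : (w \ G).card = 1 := by
            rw [Finset.card_sdiff_of_subset hsubGw, hwcard, hGcard]; omega
          obtain ⟨z, hz⟩ := Finset.card_eq_one.mp hzcard
          have hzmem : z ∈ w \ G := by rw [hz]; exact mem_singleton_self z
          have hzw : z ∈ w := (mem_sdiff.mp hzmem).1
          have hzG : z ∉ G := (mem_sdiff.mp hzmem).2
          have hkz : k ≤ z := by
            by_contra hzk
            push_neg at hzk
            have hzv : z ∈ v := (hag z hzk).mpr hzw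
            have hzne : z ≠ vm := by omega
            exact hzG (by rw [hG]; exact mem_erase.mpr ⟨hzne, hzv⟩)
          have hzmax : z = wm := by
            apply le_antisymm (hwmle z hzw)
            by_contra hcontra
            push_neg at hcontra
            have hwmG : wm ∈ G := by
              by_cases hh : wm ∈ G
              · exact hh
              · exfalso
                have : wm ∈ w \ G := mem_sdiff.mpr ⟨hwmmem, hh⟩
                rw [hz] at this
                have := mem_singleton.mp this
                omega
            have hwmG' := hwmG
            rw [hG] at hwmG'
            have h2 : wm < vm :=
              lt_of_le_of_ne (hvmle wm (mem_erase.mp hwmG').2) (mem_erase.mp hwmG').1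
            have h3 := hwmle z hzw
            omega
          rw [hw', ← hzmax]
          ext x
          constructor
          · intro hx
            exact mem_erase.mpr ⟨fun he => hzG (he ▸ hx), hsubGw hx⟩
          · intro hx
            obtain ⟨hxz, hxw⟩ := mem_erase.mp hx
            by_contra hxG
            have hmm : x ∈ w \ G := mem_sdiff.mpr ⟨hxw, hxG⟩
            rw [hz] at hmm
            exact hxz (mem_singleton.mp hmm)
      · -- v = w
        right
        rw [hG, hw', hvm, hwm, heq]
    rw [mem_biUnion]
    refine ⟨G, hGLup, ?_⟩
    rw [Finset.mem_image]
    refine ⟨vm, ?_, ?_⟩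
    · rw [mem_Icc]; exact ⟨hGsup, hvmn⟩
    · rw [hG]; exact Finset.insert_erase hvmmem
  have hA1 : UpW0.card ≤ ∑ G ∈ Lup, (n - t - G.sup id) := by
    calc UpW0.card ≤ (Lup.biUnion
        (fun G => (Icc (G.sup id + t) (n-1)).image (fun j => insert j G))).card :=
          Finset.card_le_card hClaimA
      _ ≤ ∑ G ∈ Lup, ((Icc (G.sup id + t) (n-1)).image (fun j => insert j G)).card :=
          Finset.card_biUnion_le
      _ ≤ ∑ G ∈ Lup, (n - t - G.sup id) := by
          apply Finset.sum_le_sum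
          intro G _
          calc ((Icc (G.sup id + t) (n-1)).image (fun j => insert j G)).card
              ≤ (Icc (G.sup id + t) (n-1)).card := Finset.card_image_le
            _ = n - t - G.sup id := by rw [Nat.card_Icc]; omega
  -- Claim B
  have hwmnotw' : wm ∉ w' := by rw [hw']; exact Finset.notMem_erase _ _
  have hlexww' : lexGT w w' := by
    refine ⟨wm, hwmmem, hwmnotw', fun j hj => ?_⟩
    rw [hw']
    constructor
    · intro h; exact mem_erase.mpr ⟨by omega, h⟩
    · intro h; exact (mem_erase.mp h).2
  have hnotlexw'w : ¬ lexGT w' w :=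
    lex_asymm (hbnd w hwM) (hbnd' w' hw'M) hlexww'
  have hLupsplit : Lup = insert w' (Lup.filter (fun G => lexGT G w)) := by
    ext G
    constructor
    · intro hG
      obtain ⟨hGM, h2⟩ := mem_filter.mp hG
      rcases h2 with h | h
      · exact mem_insert.mpr (Or.inr (mem_filter.mpr ⟨hG, h⟩))
      · exact mem_insert.mpr (Or.inl h)
    · intro hG
      rcases mem_insert.mp hG with rfl | h
      · exact hw'Lup
      · exact (mem_filter.mp h).1
  have hw'notin : w' ∉ Lup.filter (fun G => lexGT G w) := by
    intro h; exact hnotlexw'w (mem_filter.mp h).2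
  have hLupcard : Lup.card = (Lup.filter (fun G => lexGT G w)).card + 1 := by
    conv_lhs => rw [hLupsplit]
    rw [Finset.card_insert_of_notMem hw'notin]
  have hUpW1eq : UpW1 = (Lup.filter (fun G => lexGT G w)).image (fun G => insert n G) := by
    ext v
    constructor
    · intro hv
      obtain ⟨hvUp, hnv⟩ := mem_filter.mp hv
      obtain ⟨hvM, hvlex⟩ := mem_filter.mp hvUp
      obtain ⟨hvIcc, hvcard, hvspread⟩ := mem_M.mp hvM
      have hvw : v ≠ w := by
        intro he; rw [he] at hnv; have := hwle n hnv; omega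
      have hlex : lexGT v w := by
        rcases hvlex with h | h
        · exact h
        · exact absurd h hvw
      obtain ⟨k, hkv, hkw, hag⟩ := hlex
      have hkn : k < n := by
        have h1 : k ≤ n := hbnd v hvM k hkv
        rcases lt_or_eq_of_le h1 with h | rfl
        · exact h
        · exfalso
          have hsub : w ⊆ v := by
            intro x hx
            have := hwle x hx
            exact (hag x (by omega)).mpr hx
          have heq := Finset.eq_of_subset_of_card_le hsub (by rw [hvcard, hwcard])
          exact hvw heq.symm
      have hGM : v.erase n ∈ M (n-t) (d-1) t := by
        rw [mem_M]
        refine ⟨?_, by rw [Finset.card_erase_of_mem hnv, hvcard], ?_⟩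
        · intro g hg
          obtain ⟨hgne, hgv⟩ := mem_erase.mp hg
          have h1 : g < n := lt_of_le_of_ne (hbnd v hvM g hgv) hgne
          have h2 : g + t ≤ n := hvspread g hgv n hnv h1
          rw [mem_Icc]; exact ⟨hge1 v hvM g hgv, by omega⟩
        · intro a ha b hb hab
          exact hvspread a (mem_erase.mp ha).2 b (mem_erase.mp hb).2 hab
      have hGlex : lexGT (v.erase n) w := by
        refine ⟨k, mem_erase.mpr ⟨by omega, hkv⟩, hkw, fun j hj => ?_⟩
        rw [← hag j hj]
        constructor
        · exact fun h => (mem_erase.mp h).2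
        · exact fun h => mem_erase.mpr ⟨by omega, h⟩
      exact Finset.mem_image.mpr ⟨v.erase n,
        mem_filter.mpr ⟨mem_filter.mpr ⟨hGM, Or.inl hGlex⟩, hGlex⟩, Finset.insert_erase hnv⟩
    · intro hv
      obtain ⟨G, hG, rfl⟩ := Finset.mem_image.mp hv
      obtain ⟨hGLup, hGlex⟩ := mem_filter.mp hG
      have hGM := (mem_filter.mp hGLup).1
      obtain ⟨hGIcc, hGcard, hGspread⟩ := mem_M.mp hGM
      have hGn : ∀ g ∈ G, g ≤ n - t := fun g hg => (mem_Icc.mp (hGIcc hg)).2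
      have hGn1 : ∀ g ∈ G, 1 ≤ g := fun g hg => (mem_Icc.mp (hGIcc hg)).1
      have hnG : n ∉ G := fun h => by have := hGn n h; omega
      have hvM : insert n G ∈ M n d t := by
        rw [mem_M]
        refine ⟨?_, ?_, ?_⟩
        · intro x hx
          rcases mem_insert.mp hx with rfl | hxG
          · rw [mem_Icc]; omega
          · rw [mem_Icc]; exact ⟨hGn1 x hxG, by have := hGn x hxG; omega⟩
        · rw [Finset.card_insert_of_notMem hnG, hGcard]; omega
        · intro a ha b hb hab
          rcases mem_insert.mp ha with rfl | haG
          · rcases mem_insert.mp hb with rfl | hbG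
            · omega
            · exfalso; have := hGn b hbG; omega
          · rcases mem_insert.mp hb with rfl | hbG
            · have := hGn a haG; omega
            · exact hGspread a haG b hbG hab
      have hvlex : lexGT (insert n G) w := by
        obtain ⟨k, hkG, hkw, hag⟩ := hGlex
        refine ⟨k, mem_insert_of_mem hkG, hkw, fun j hj => ?_⟩
        rw [← hag j hj]
        constructor
        · intro h
          rcases mem_insert.mp h with rfl | h2
          · exfalso; have := hGn k hkG; omega
          · exact h2
        · exact fun h => mem_insert_of_mem h
      exact mem_filter.mpr ⟨mem_filter.mpr ⟨hvM, Or.inl hvlex⟩, mem_insert_self n G⟩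
  have hUpW1card : UpW1.card = (Lup.filter (fun G => lexGT G w)).card := by
    rw [hUpW1eq]
    apply Finset.card_image_of_injOn
    intro G1 h1 G2 h2 he
    have hnotin : ∀ G ∈ Lup.filter (fun G => lexGT G w), n ∉ G := by
      intro G hG hnn
      have hGM := (mem_filter.mp (mem_filter.mp hG).1).1
      have := (mem_Icc.mp ((mem_M.mp hGM).1 hnn)).2
      omega
    have e1 : G1 = (insert n G1).erase n := (Finset.erase_insert (hnotin G1 h1)).symm
    rw [e1]
    simp only at he
    rw [he, Finset.erase_insert (hnotin G2 h2)]
  -- N decomposition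
  set N1s := N.filter (fun F => n ∈ F) with hN1s
  set N1 := N1s.image (fun F => F.erase n) with hN1
  have hNsplit : N1s.card + N0.card = N.card := by
    have h1 := Finset.card_filter_add_card_filter_not (s := N) (p := fun F => n ∈ F)
    have h2 : N.filter (fun F => ¬ n ∈ F) = N0 := by
      apply Finset.filter_congr
      intro F hF
      have hb := hbnd F (hN.1 hF)
      constructor
      · intro hnF j hj
        have h3 := hb j hj
        have h4 : j ≠ n := fun he => hnF (he ▸ hj)
        omega
      · intro hle hnF
        have := hle n hnF; omega
    rw [h2] at h1
    exact h1
  have hN1card : N1.card = N1s.card := by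
    rw [hN1]
    apply Finset.card_image_of_injOn
    intro F1 h1 F2 h2 he
    have e1 : F1 = insert n (F1.erase n) := (Finset.insert_erase (mem_filter.mp h1).2).symm
    rw [e1]
    simp only at he
    rw [he, Finset.insert_erase (mem_filter.mp h2).2]
  have hN1M : ∀ G ∈ N1, G ∈ M (n-t) (d-1) t := by
    intro G hG
    rw [hN1] at hG
    obtain ⟨F, hF, rfl⟩ := Finset.mem_image.mp hG
    obtain ⟨hFN, hnF⟩ := mem_filter.mp hF
    have hFM := hN.1 hFN
    obtain ⟨hFIcc, hFcard, hFspread⟩ := mem_M.mp hFM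
    rw [mem_M]
    refine ⟨?_, by rw [Finset.card_erase_of_mem hnF, hFcard], ?_⟩
    · intro g hg
      obtain ⟨hgne, hgF⟩ := mem_erase.mp hg
      have h1 : g < n := lt_of_le_of_ne ((mem_Icc.mp (hFIcc hgF)).2) hgne
      have h2 := hFspread g hgF n hnF h1
      rw [mem_Icc]; exact ⟨(mem_Icc.mp (hFIcc hgF)).1, by omega⟩
    · intro a ha b hb hab
      exact hFspread a (mem_erase.mp ha).2 b (mem_erase.mp hb).2 hab
  have hN1SSS : IsSSS (n-t) (d-1) t N1 := by
    constructor
    · intro G hG; exact hN1M G hG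
    · intro G hG j hj i' hi'j hi'G hmem
      rw [hN1] at hG
      obtain ⟨F, hF, rfl⟩ := Finset.mem_image.mp hG
      obtain ⟨hFN, hnF⟩ := mem_filter.mp hF
      obtain ⟨hXIcc, hXcard, hXspread⟩ := mem_M.mp hmem
      have hjn : j ≠ n := (mem_erase.mp hj).1
      have hjF : j ∈ F := (mem_erase.mp hj).2
      have hnX : n ∉ insert i' ((F.erase n).erase j) := by
        intro h
        have := (mem_Icc.mp (hXIcc h)).2; omega
      have hi'n : i' ≠ n := by
        intro he
        exact hnX (he ▸ mem_insert_self i' ((F.erase n).erase j))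
      have hi'F : i' ∉ F := by
        intro h
        exact hi'G (mem_erase.mpr ⟨hi'n, h⟩)
      have hid : insert i' (F.erase j) = insert n (insert i' ((F.erase n).erase j)) := by
        ext x
        simp only [mem_insert, mem_erase]
        constructor
        · rintro (rfl | ⟨hxj, hxF⟩)
          · right; left; rfl
          · by_cases hxn : x = n
            · left; exact hxn
            · right; right; exact ⟨hxj, hxn, hxF⟩
        · rintro (rfl | rfl | ⟨hxj, hxn, hxF⟩)
          · right; exact ⟨fun h => hjn h.symm, hnF⟩
          · left; rfl
          · right; exact ⟨hxj, hxF⟩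
      have hXM : insert n (insert i' ((F.erase n).erase j)) ∈ M n d t := by
        rw [mem_M]
        refine ⟨?_, ?_, ?_⟩
        · intro x hx
          rcases mem_insert.mp hx with rfl | hxX
          · rw [mem_Icc]; omega
          · have := mem_Icc.mp (hXIcc hxX); rw [mem_Icc]; omega
        · rw [Finset.card_insert_of_notMem hnX, hXcard]; omega
        · intro a ha b hb hab
          rcases mem_insert.mp ha with rfl | haX
          · rcases mem_insert.mp hb with rfl | hbX
            · omega
            · exfalso; have := (mem_Icc.mp (hXIcc hbX)).2; omega
          · rcases mem_insert.mp hb with rfl | hbX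
            · have := (mem_Icc.mp (hXIcc haX)).2; omega
            · exact hXspread a haX b hbX hab
      have hres : insert i' (F.erase j) ∈ N :=
        hN.2 F hFN j hjF i' hi'j hi'F (by rw [hid]; exact hXM)
      rw [hN1]
      rw [Finset.mem_image]
      refine ⟨insert i' (F.erase j), ?_, ?_⟩
      · refine mem_filter.mpr ⟨hres, ?_⟩
        rw [hid]; exact mem_insert_self _ _
      · rw [hid]; exact Finset.erase_insert hnX
  -- spawn bound
  have hspawn : ∑ G ∈ N1, (n - t - G.sup id) ≤ N0.card := by
    have hBU : N1.biUnion (fun G => (Icc (G.sup id + t) (n-1)).image (fun j => insert j G))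
        ⊆ N0 := by
      intro v hv
      rw [mem_biUnion] at hv
      obtain ⟨G, hG, hv2⟩ := hv
      rw [Finset.mem_image] at hv2
      obtain ⟨j, hjIcc, rfl⟩ := hv2
      rw [mem_Icc] at hjIcc
      have hGM := hN1M _ hG
      obtain ⟨hGIcc, hGcard, hGspread⟩ := mem_M.mp hGM
      rw [hN1] at hG
      obtain ⟨F, hF, rfl⟩ := Finset.mem_image.mp hG
      obtain ⟨hFN, hnF⟩ := mem_filter.mp hF
      have hsupb : ∀ g ∈ F.erase n, g ≤ (F.erase n).sup id :=
        fun g hg => Finset.le_sup (f := id) hg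
      have hjG : j ∉ F.erase n := by
        intro h; have := hsupb j h; omega
      have hjn : j ≠ n := by omega
      have hins : insert j (F.erase n) ∈ M n d t := by
        rw [mem_M]
        refine ⟨?_, by rw [Finset.card_insert_of_notMem hjG, hGcard]; omega, ?_⟩
        · intro x hx
          rcases mem_insert.mp hx with rfl | hxG
          · rw [mem_Icc]; omega
          · have := mem_Icc.mp (hGIcc hxG); rw [mem_Icc]; omega
        · intro a ha b hb hab
          rcases mem_insert.mp ha with rfl | haG
          · rcases mem_insert.mp hb with rfl | hbG
            · omega
            · exfalso; have := hsupb b hbG; omega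
          · rcases mem_insert.mp hb with rfl | hbG
            · have := hsupb a haG; omega
            · exact hGspread a haG b hbG hab
      have hresN : insert j (F.erase n) ∈ N :=
        hN.2 F hFN n hnF j (by omega) (fun h => hjG (mem_erase.mpr ⟨hjn, h⟩)) hins
      refine mem_filter.mpr ⟨hresN, ?_⟩
      intro x hx
      rcases mem_insert.mp hx with rfl | hxG
      · omega
      · have := (mem_Icc.mp (hGIcc hxG)).2; omega
    have hcardBU : (N1.biUnion (fun G => (Icc (G.sup id + t) (n-1)).image
        (fun j => insert j G))).card
        = ∑ G ∈ N1, ((Icc (G.sup id + t) (n-1)).image (fun j => insert j G)).card := by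
      apply Finset.card_biUnion
      intro G1 h1 G2 h2 hne12
      rw [Function.onFun, Finset.disjoint_left]
      intro v hv1 hv2
      obtain ⟨j1, hj1, he1⟩ := Finset.mem_image.mp hv1
      obtain ⟨j2, hj2, he2⟩ := Finset.mem_image.mp hv2
      rw [mem_Icc] at hj1 hj2
      have hb1 : ∀ x ∈ v, x ≤ j1 := by
        intro x hx; rw [← he1] at hx
        rcases mem_insert.mp hx with rfl | h
        · exact le_refl _
        · have h2 : x ≤ G1.sup id := Finset.le_sup (f := id) h
          omega
      have hb2 : ∀ x ∈ v, x ≤ j2 := by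
        intro x hx; rw [← he2] at hx
        rcases mem_insert.mp hx with rfl | h
        · exact le_refl _
        · have h2 : x ≤ G2.sup id := Finset.le_sup (f := id) h
          omega
      have hj1v : j1 ∈ v := by rw [← he1]; exact mem_insert_self _ _
      have hj2v : j2 ∈ v := by rw [← he2]; exact mem_insert_self _ _
      have hjeq : j1 = j2 := le_antisymm (hb2 j1 hj1v) (hb1 j2 hj2v)
      subst hjeq
      apply hne12
      have hn1 : j1 ∉ G1 := fun h => by
        have h2 : j1 ≤ G1.sup id := Finset.le_sup (f := id) h
        omega
      have hn2 : j1 ∉ G2 := fun h => by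
        have h2 : j1 ≤ G2.sup id := Finset.le_sup (f := id) h
        omega
      rw [← Finset.erase_insert hn1, he1, ← he2, Finset.erase_insert hn2]
    calc ∑ G ∈ N1, (n - t - G.sup id)
        = ∑ G ∈ N1, ((Icc (G.sup id + t) (n-1)).image (fun j => insert j G)).card := by
          apply Finset.sum_congr rfl
          intro G hG
          rw [Finset.card_image_of_injOn, Nat.card_Icc]
          · omega
          · intro a ha b hb he
            simp only [Finset.coe_Icc, Set.mem_Icc] at ha hb
            have haG : a ∉ G := by
              intro h
              have h2 : a ≤ G.sup id := Finset.le_sup (f := id) h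
              omega
            have hbG : b ∉ G := by
              intro h
              have h2 : b ≤ G.sup id := Finset.le_sup (f := id) h
              omega
            have he' : insert a G = insert b G := he
            have hmm : a ∈ insert b G := by rw [← he']; exact mem_insert_self _ _
            rcases mem_insert.mp hmm with h | h
            · exact h
            · exact absurd h haG
      _ = (N1.biUnion (fun G => (Icc (G.sup id + t) (n-1)).image
            (fun j => insert j G))).card := hcardBU.symm
      _ ≤ N0.card := Finset.card_le_card hBU
  -- sums via mLe
  have hsum : ∀ S : Finset (Finset ℕ), (∀ G ∈ S, G ∈ M (n-t) (d-1) t) →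
      ∑ G ∈ S, (n - t - G.sup id) = ∑ j ∈ Icc 1 (n - t - 1), mLe j S := by
    intro S hSM
    have hstep : ∀ G ∈ S, (n - t - G.sup id) = ((n - t - 1) + 1 - G.sup id) := by
      intro G _; omega
    rw [Finset.sum_congr rfl hstep]
    apply sum_identity
    intro G hG
    obtain ⟨hGIcc, hGcard, _⟩ := mem_M.mp (hSM G hG)
    constructor
    · rw [← Finset.card_pos, hGcard]; omega
    · intro g hg; exact (mem_Icc.mp (hGIcc hg)).1
  rcases le_or_gt Lup.card N1.card with hcase | hcase
  · have hrec := IH Lup N1 hLupLex hN1SSS hcase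
    have hchain : UpW0.card ≤ N0.card := by
      calc UpW0.card ≤ ∑ G ∈ Lup, (n - t - G.sup id) := hA1
        _ = ∑ j ∈ Icc 1 (n-t-1), mLe j Lup :=
            hsum Lup (fun G hG => (mem_filter.mp hG).1)
        _ ≤ ∑ j ∈ Icc 1 (n-t-1), mLe j N1 := Finset.sum_le_sum (fun j _ => hrec j)
        _ = ∑ G ∈ N1, (n - t - G.sup id) := (hsum N1 hN1M).symm
        _ ≤ N0.card := hspawn
    omega
  · have h1 : N1.card ≤ UpW1.card := by omega
    have hLcard : UpW.card ≤ L.card := Finset.card_le_card hUpWsubL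
    omega

lemma main_aux : ∀ (k n d t : ℕ), n + d ≤ k → 1 ≤ t → 1 ≤ d →
    ∀ L N : Finset (Finset ℕ), IsLexSet n d t L → IsSSS n d t N → L.card ≤ N.card →
    ∀ i, mLe i L ≤ mLe i N := by
  intro k
  induction k with
  | zero =>
    intro n d t hk ht hd
    exact absurd hk (by omega)
  | succ k IH =>
    intro n d t hk ht hd L N hL hN hcard i
    by_cases hni : n ≤ i
    · rw [mLe_eq_card hL.1 hni, mLe_eq_card hN.1 hni]; exact hcard
    push_neg at hni
    rcases eq_or_lt_of_le hd with hd1 | hd2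
    · subst hd1
      exact d_one_case L N hL hN hcard i
    · have hn1 : 1 ≤ n := by omega
      have hcrux : mLe (n-1) L ≤ mLe (n-1) N :=
        crux ht hd2 hn1 L N hL hN hcard
          (fun L' N' h1 h2 h3 j => IH (n-t) (d-1) t (by omega) ht (by omega) L' N' h1 h2 h3 j)
      have hcrux' : (L.filter (fun F => ∀ j ∈ F, j ≤ n - 1)).card
          ≤ (N.filter (fun F => ∀ j ∈ F, j ≤ n - 1)).card := hcrux
      have hMsub : M (n-1) d t ⊆ M n d t := by
        intro F hF
        rw [mem_M] at hF ⊢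
        refine ⟨fun x hx => ?_, hF.2.1, hF.2.2⟩
        have := mem_Icc.mp (hF.1 hx)
        rw [mem_Icc]; omega
      have hL0lex : IsLexSet (n-1) d t (L.filter (fun F => ∀ j ∈ F, j ≤ n - 1)) := by
        constructor
        · intro F hF
          obtain ⟨hFL, hFle⟩ := mem_filter.mp hF
          have hFM := hL.1 hFL
          rw [mem_M] at hFM ⊢
          refine ⟨fun x hx => ?_, hFM.2.1, hFM.2.2⟩
          have := mem_Icc.mp (hFM.1 hx)
          rw [mem_Icc]; exact ⟨this.1, hFle x hx⟩
        · intro u hu v hvM hlex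
          obtain ⟨huL, _⟩ := mem_filter.mp hu
          refine mem_filter.mpr ⟨hL.2 u huL v (hMsub hvM) hlex, ?_⟩
          intro j hj
          exact (mem_Icc.mp ((mem_M.mp hvM).1 hj)).2
      have hN0sss : IsSSS (n-1) d t (N.filter (fun F => ∀ j ∈ F, j ≤ n - 1)) := by
        constructor
        · intro F hF
          obtain ⟨hFN, hFle⟩ := mem_filter.mp hF
          have hFM := hN.1 hFN
          rw [mem_M] at hFM ⊢
          refine ⟨fun x hx => ?_, hFM.2.1, hFM.2.2⟩
          have := mem_Icc.mp (hFM.1 hx)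
          rw [mem_Icc]; exact ⟨this.1, hFle x hx⟩
        · intro F hF j hj i' hi' hi'F hmem
          obtain ⟨hFN, hFle⟩ := mem_filter.mp hF
          refine mem_filter.mpr ⟨hN.2 F hFN j hj i' hi' hi'F (hMsub hmem), ?_⟩
          intro x hx
          exact (mem_Icc.mp ((mem_M.mp hmem).1 hx)).2
      have hIH := IH (n-1) d t (by omega) ht hd _ _ hL0lex hN0sss hcrux' i
      have hres : ∀ S : Finset (Finset ℕ),
          mLe i (S.filter (fun F => ∀ j ∈ F, j ≤ n - 1)) = mLe i S := by
        intro S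
        unfold mLe
        rw [Finset.filter_filter]
        congr 1
        apply Finset.filter_congr
        intro F _
        constructor
        · exact fun h => h.2
        · intro h
          exact ⟨fun j hj => by have := h j hj; omega, h⟩
      rw [← hres L, ← hres N]
      exact hIH


/-- if `L` is a `t`-spread lex set and `N` a `t`-spread strongly stable
set in `M_{n,d,t}` with `|L| ≤ |N|`, then `m_{≤ i}(L) ≤ m_{≤ i}(N)` for all `i`. -/
theorem mLe_lex_le_sss (n d t : ℕ) (ht : 1 ≤ t) (hd : 1 ≤ d)
    (L N : Finset (Finset ℕ)) (hL : IsLexSet n d t L) (hN : IsSSS n d t N)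
    (hcard : L.card ≤ N.card) (i : ℕ) :
    mLe i L ≤ mLe i N :=
  main_aux (n + d) n d t le_rfl ht hd L N hL hN hcard i
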